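/- arXiv:2505.03205 — 2 statements merged into one kernel-verified Lean document; each statement's English description precedes it below -/
import Mathlib

section
/- (Gating Lemma) Let d_embed ≥ 5 and H = [h_t]_{1≤t≤ℓ} ∈ ℝ^{d_embed×ℓ} be an embedding matrix with rows d_embed−2, d_embed−1 equal to the positional encodings 𝓘_t and last row all ones. Then for any 1 ≤ r₁ ≤ r₂ ≤ d_embed−3 and any 1 ≤ k₁, k₂ ≤ ℓ, there exist two-layer feed-forward ReLU networks FFN₁ and FFN₂ with ‖θ_FFN‖_∞ ≤ O(ℓ ‖H‖_{∞,∞}) such that: FFN₁(h_t) = h_t for t ∈ {1,…,k₁} and FFN₁(h_t) zeroes out coordinates r₁ through r₂ of h_t (leaving all other coordinates, the positional encoding, and the constant 1 unchanged) otherwise; and FFN₂(h_t) = h_t for t ∈ {k₂,…,ℓ} and zeroes out coordinates r₁ through r₂ otherwise. -/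
open scoped BigOperators
open Metric Set MeasureTheory
open scoped Matrix

namespace Paper

noncomputable section

/-- ReLU activation. -/
def relu (x : ℝ) : ℝ := max x 0

/-- Euclidean space `ℝ^D` with the `ℓ²` norm. -/
abbrev Euc (D : ℕ) := EuclideanSpace ℝ (Fin D)

/-- Maximum absolute entry of a matrix (`‖H‖_{∞,∞}`). -/
def matSup {m n : ℕ} (H : Matrix (Fin m) (Fin n) ℝ) : ℝ := ⨆ i, ⨆ j, |H i j|

/-- Sup norm `‖x‖_∞` of a vector. -/
def supNorm {D : ℕ} (x : Fin D → ℝ) : ℝ := ⨆ i, |x i|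

/-- An attention head: query, key and value matrices. -/
structure Head (de : ℕ) where
  Q : Matrix (Fin de) (Fin de) ℝ
  K : Matrix (Fin de) (Fin de) ℝ
  V : Matrix (Fin de) (Fin de) ℝ

/-- Action of an attention head on an embedding matrix:
`A(H) = V H σ((K H)ᵀ Q H)` with `σ = ReLU`. -/
def Head.eval {de : ℕ} (A : Head de) {ℓ : ℕ} (H : Matrix (Fin de) (Fin ℓ) ℝ) :
    Matrix (Fin de) (Fin ℓ) ℝ :=
  A.V * H * ((A.K * H)ᵀ * (A.Q * H)).map relu

/-- Tokenwise action of an attention head: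
`A(h_t) = Σ_j σ(⟨Q h_t, K h_j⟩) V h_j`. -/
def Head.tokenEval {de ℓ : ℕ} (A : Head de) (H : Matrix (Fin de) (Fin ℓ) ℝ)
    (t : Fin ℓ) : Fin de → ℝ := fun i =>
  ∑ j : Fin ℓ,
    relu (∑ k, A.Q.mulVec (fun r => H r t) k * A.K.mulVec (fun r => H r j) k) *
      A.V.mulVec (fun r => H r j) i

/-- Maximum weight magnitude of an attention head. -/
def Head.wnorm {de : ℕ} (A : Head de) : ℝ := matSup A.Q ⊔ matSup A.K ⊔ matSup A.V

/-- A fully-connected (tokenwise) ReLU feed-forward network of depth `L`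
and hidden width `w` on embedding dimension `de`. -/
structure FFN (de w L : ℕ) where
  Win : Matrix (Fin w) (Fin de) ℝ
  bin : Fin w → ℝ
  Wmid : Fin L → Matrix (Fin w) (Fin w) ℝ
  bmid : Fin L → Fin w → ℝ
  Wout : Matrix (Fin de) (Fin w) ℝ
  bout : Fin de → ℝ

/-- Evaluation of a feed-forward ReLU network on one token. -/
def FFN.eval {de w L : ℕ} (f : FFN de w L) (x : Fin de → ℝ) : Fin de → ℝ :=
  let h0 : Fin w → ℝ := fun i => relu (∑ j, f.Win i j * x j + f.bin i)
  let hL : Fin w → ℝ := (List.finRange L).foldl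
    (fun h k => fun i => relu (∑ j, f.Wmid k i j * h j + f.bmid k i)) h0
  fun i => ∑ j, f.Wout i j * hL j + f.bout i

/-- Maximum weight magnitude of a feed-forward network. -/
def FFN.wnorm {de w L : ℕ} (f : FFN de w L) : ℝ :=
  matSup f.Win ⊔ (⨆ i, |f.bin i|) ⊔ (⨆ k, matSup (f.Wmid k)) ⊔
    (⨆ k, ⨆ i, |f.bmid k i|) ⊔ matSup f.Wout ⊔ (⨆ i, |f.bout i|)

/-- A two-layer feed-forward ReLU network. -/
structure TwoLayerFFN (de w : ℕ) where
  W1 : Matrix (Fin w) (Fin de) ℝ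
  b1 : Fin w → ℝ
  W2 : Matrix (Fin de) (Fin w) ℝ
  b2 : Fin de → ℝ

def TwoLayerFFN.eval {de w : ℕ} (f : TwoLayerFFN de w) (x : Fin de → ℝ) :
    Fin de → ℝ := fun i =>
  ∑ j, f.W2 i j * relu (∑ k, f.W1 j k * x k + f.b1 j) + f.b2 i

def TwoLayerFFN.wnorm {de w : ℕ} (f : TwoLayerFFN de w) : ℝ :=
  matSup f.W1 ⊔ (⨆ i, |f.b1 i|) ⊔ matSup f.W2 ⊔ (⨆ i, |f.b2 i|)

/-- A transformer block `B(H) = FFN(MHA(H)+H) + MHA(H) + H` with `m` attention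
heads and a tokenwise feed-forward network of depth `L` and width `w`;
this formalizes the class `𝓑(m, L, de)`. -/
structure Block (de m w L : ℕ) where
  heads : Fin m → Head de
  ffn : FFN de w L

def Block.eval {de m w L : ℕ} (B : Block de m w L) {ℓ : ℕ}
    (H : Matrix (Fin de) (Fin ℓ) ℝ) : Matrix (Fin de) (Fin ℓ) ℝ :=
  let H1 := (∑ j, (B.heads j).eval H) + H
  Matrix.of (fun i t => B.ffn.eval (fun r => H1 r t) i) + H1

def Block.wnorm {de m w L : ℕ} (B : Block de m w L) : ℝ :=
  (⨆ j, (B.heads j).wnorm) ⊔ B.ffn.wnorm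

/-- A transformer network: linear embedding, positional encoding, `LT` transformer
blocks (each with `mT` heads and FFNs of depth `LF`, width `wF`), and a decoding
layer returning the first entry of the last column. -/
structure TransformerNet (D LT mT de ℓ LF wF : ℕ) where
  emb : Fin de → Fin ℓ → Fin D → ℝ
  PE : Matrix (Fin de) (Fin ℓ) ℝ
  blocks : Fin LT → Block de mT wF LF

def TransformerNet.eval {D LT mT de ℓ LF wF : ℕ}
    (T : TransformerNet D LT mT de ℓ LF wF) (x : Fin D → ℝ) : ℝ :=
  let H0 : Matrix (Fin de) (Fin ℓ) ℝ :=
    T.PE + Matrix.of fun i t => ∑ j, T.emb i t j * x j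
  let HL := (List.finRange LT).foldl (fun H k => (T.blocks k).eval H) H0
  if h : 0 < de ∧ 0 < ℓ then HL ⟨0, h.1⟩ ⟨ℓ - 1, Nat.sub_lt h.2 Nat.one_pos⟩ else 0

/-- Maximum weight magnitude `‖θ‖_∞` of a transformer network. -/
def TransformerNet.wnorm {D LT mT de ℓ LF wF : ℕ}
    (T : TransformerNet D LT mT de ℓ LF wF) : ℝ :=
  (⨆ i, ⨆ t, ⨆ j, |T.emb i t j|) ⊔ matSup T.PE ⊔ (⨆ k, (T.blocks k).wnorm)

/-- Membership in the transformer class `𝒯(L_T, m_T, d_embed, ℓ, L_FFN, w_FFN, R, κ)`: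
sup-norm output bound `R` and weight magnitudes at most `κ`. -/
def TransformerNet.inClass {D LT mT de ℓ LF wF : ℕ}
    (T : TransformerNet D LT mT de ℓ LF wF) (R κ : ℝ) : Prop :=
  (∀ x : Fin D → ℝ, |T.eval x| ≤ R) ∧ T.wnorm ≤ κ

/-- Medial axis of a set. -/
def medialAxis {D : ℕ} (S : Set (Euc D)) : Set (Euc D) :=
  {x | ∃ p ∈ S, ∃ q ∈ S, p ≠ q ∧
    dist p x = infDist x S ∧ dist q x = infDist x S}

/-- Local reach `τ_M(v)`. -/
def localReach {D : ℕ} (S : Set (Euc D)) (v : Euc D) : ℝ :=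
  infDist v (medialAxis S)

/-- Reach `τ_M` of a set. -/
def reach {D : ℕ} (S : Set (Euc D)) : ℝ := ⨅ v ∈ S, localReach S v

/-- Geodesic distance on `S`: infimum of lengths of `C¹` curves in `S`. -/
def geoDist {D : ℕ} (S : Set (Euc D)) (v v' : Euc D) : ℝ :=
  sInf {l : ℝ | ∃ γ : ℝ → Euc D, (∀ t ∈ Icc (0:ℝ) 1, γ t ∈ S) ∧
    ContDiffOn ℝ 1 γ (Icc 0 1) ∧ γ 0 = v ∧ γ 1 = v' ∧
    l = ∫ t in (0:ℝ)..1, ‖deriv γ t‖}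

/-- Orthogonal projection onto `S` (a choice of nearest point, when one exists). -/
def projOn {D : ℕ} (S : Set (Euc D)) (x : Euc D) : Euc D :=
  Classical.epsilon fun y => y ∈ S ∧ dist x y = infDist x S

/-- A nonempty, compact, connected `d`-dimensional manifold `M ⊆ [0,1]^D`,
together with a choice of orthonormal tangent frames `P(v)`. -/
structure GoodManifold (D d : ℕ) where
  carrier : Set (Euc D)
  nonempty : carrier.Nonempty
  compact : IsCompact carrier
  connected : IsConnected carrier
  subset_cube : ∀ x ∈ carrier, ∀ i, x i ∈ Icc (0:ℝ) 1
  locallyEuclidean : ∀ v ∈ carrier, ∃ U : Set (Euc D), IsOpen U ∧ v ∈ U ∧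
    ∃ V : Set (EuclideanSpace ℝ (Fin d)), IsOpen V ∧
      Nonempty (↥(carrier ∩ U) ≃ₜ ↥V)
  frame : Euc D → Matrix (Fin D) (Fin d) ℝ
  frame_orthonormal : ∀ v ∈ carrier, (frame v)ᵀ * frame v = 1

/-- The tubular region `M(q)` around the manifold. -/
def GoodManifold.tube {D d : ℕ} (M : GoodManifold D d) (q : ℝ) : Set (Euc D) :=
  {x | ∃ v ∈ M.carrier, ∃ u : Euc D, x = v + u ∧
    (M.frame v)ᵀ.mulVec (fun i => u i) = 0 ∧
    ‖u‖ < q * localReach M.carrier v}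

/-- The volume `Vol(M)`: the `d`-dimensional Hausdorff measure of the carrier. -/
def vol {D d : ℕ} (M : GoodManifold D d) : ℝ :=
  (MeasureTheory.Measure.hausdorffMeasure (d : ℝ) M.carrier).toReal

/-- A maximal `δ`-separated net `{z₁,…,z_K}` of `M` w.r.t. geodesic distance. -/
structure SepNet {D d : ℕ} (M : GoodManifold D d) (δ : ℝ) (K : ℕ) where
  z : Fin K → Euc D
  mem : ∀ i, z i ∈ M.carrier
  sep : ∀ i j, i ≠ j → δ < geoDist M.carrier (z i) (z j)
  maximal : ∀ y ∈ M.carrier, ∃ i, geoDist M.carrier y (z i) ≤ δ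

/-- The bump functions `η̃_i` built from the net, with `p = (1+q)/2` and
`h = 6/(1 - q p⁻¹)`. -/
def etaTilde {D d K : ℕ} (M : GoodManifold D d) (q δ : ℝ) (N : SepNet M δ K)
    (i : Fin K) (x : Euc D) : ℝ :=
  relu (1 - (dist x (N.z i) / (((1 + q) / 2) * localReach M.carrier (N.z i))) ^ 2
    - (Real.sqrt (∑ j, (∑ r, M.frame (N.z i) r j * (x r - N.z i r)) ^ 2)
        / ((6 / (1 - q / ((1 + q) / 2))) * δ)) ^ 2)

/-- The normalized partition of unity `η_i = η̃_i / ‖η̃‖₁`. -/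
def etaFun {D d K : ℕ} (M : GoodManifold D d) (q δ : ℝ) (N : SepNet M δ K)
    (i : Fin K) (x : Euc D) : ℝ :=
  etaTilde M q δ N i x / ∑ j, etaTilde M q δ N j x

/-- Embedding matrix predicate for `d_embed = 5`: second row zero, rows 3–4 the
sinusoidal positional encodings, fifth row all ones. -/
def IsEmbed5 {ℓ : ℕ} (H : Matrix (Fin 5) (Fin ℓ) ℝ) : Prop :=
  (∀ t, H 1 t = 0) ∧
  (∀ t : Fin ℓ, H 2 t = Real.cos ((((t : ℕ) : ℝ) + 1) * Real.pi / (2 * ℓ))) ∧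
  (∀ t : Fin ℓ, H 3 t = Real.sin ((((t : ℕ) : ℝ) + 1) * Real.pi / (2 * ℓ))) ∧
  (∀ t, H 4 t = 1)

/-- Embedding matrix predicate for general `d_embed = e + 5 ≥ 5`: rows
`d_embed−2, d_embed−1` are the positional encodings and the last row is all ones. -/
def IsEmbedG (e ℓ : ℕ) (H : Matrix (Fin (e + 5)) (Fin ℓ) ℝ) : Prop :=
  (∀ t : Fin ℓ, H ⟨e + 2, by omega⟩ t
      = Real.cos ((((t : ℕ) : ℝ) + 1) * Real.pi / (2 * ℓ))) ∧
  (∀ t : Fin ℓ, H ⟨e + 3, by omega⟩ t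
      = Real.sin ((((t : ℕ) : ℝ) + 1) * Real.pi / (2 * ℓ))) ∧
  (∀ t, H ⟨e + 4, by omega⟩ t = 1)

section GatingAux

lemma relu_of_nonneg {x : ℝ} (h : 0 ≤ x) : relu x = x := max_eq_left h

lemma relu_of_nonpos {x : ℝ} (h : x ≤ 0) : relu x = 0 := max_eq_right h

/-- The gating two-layer network: width `de + 1`; hidden unit `j < de` computes
`σ(x_j + u - B)` (gated coords) or `σ(x_j + B)` (ungated); unit `de` computes
`σ(u - B)`, where `u = ⟨v, x⟩ + β`. -/
def gateFFN (de : ℕ) (Gn : ℕ → Bool) (v : Fin de → ℝ) (β B : ℝ) :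
    TwoLayerFFN de (de + 1) where
  W1 := fun j k => (if (j : ℕ) = (k : ℕ) then (1:ℝ) else 0) +
    (if ((j : ℕ) = de ∨ Gn (j : ℕ)) then v k else 0)
  b1 := fun j => if ((j : ℕ) = de ∨ Gn (j : ℕ)) then β - B else B
  W2 := fun i j => if (j : ℕ) = (i : ℕ) then (1:ℝ)
    else if ((j : ℕ) = de ∧ Gn (i : ℕ)) then -1 else 0
  b2 := fun i => if Gn (i : ℕ) then (0:ℝ) else -B

lemma gateFFN_eval_eq (de : ℕ) (Gn : ℕ → Bool) (v : Fin de → ℝ) (β B : ℝ)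
    (x : Fin de → ℝ) (i : Fin de) :
    (gateFFN de Gn v β B).eval x i =
      relu (x i + (if Gn (i : ℕ) then (∑ k, v k * x k) + β - B else B))
      + (if Gn (i : ℕ) then -(relu ((∑ k, v k * x k) + β - B)) else -B) := by
  set S := ∑ k, v k * x k with hS
  have hdelta : ∀ j : Fin de,
      (∑ k : Fin de, (if ((j : ℕ)) = (k : ℕ) then (1:ℝ) else 0) * x k) = x j := by
    intro j
    rw [Finset.sum_eq_single j]
    · simp
    · intro b _ hb
      rw [if_neg, zero_mul]
      exact fun h => hb (Fin.ext h.symm)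
    · intro h; exact absurd (Finset.mem_univ j) h
  have hin : ∀ j : Fin (de + 1),
      (∑ k, (gateFFN de Gn v β B).W1 j k * x k) + (gateFFN de Gn v β B).b1 j
        = (∑ k : Fin de, (if ((j : ℕ)) = (k : ℕ) then (1:ℝ) else 0) * x k)
          + (if ((j : ℕ) = de ∨ Gn (j : ℕ)) then S + β - B else B) := by
    intro j
    show (∑ k : Fin de, ((if (j : ℕ) = (k : ℕ) then (1:ℝ) else 0) +
        (if ((j : ℕ) = de ∨ Gn (j : ℕ)) then v k else 0)) * x k)
        + (if ((j : ℕ) = de ∨ Gn (j : ℕ)) then β - B else B) = _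
    by_cases hc : ((j : ℕ) = de ∨ Gn (j : ℕ)) <;>
      simp only [hc, if_true, if_false, add_mul, Finset.sum_add_distrib] <;>
      [skip; simp] <;> ring_nf <;> rw [hS] <;> ring
  show (∑ j : Fin (de+1), (gateFFN de Gn v β B).W2 i j *
      relu ((∑ k, (gateFFN de Gn v β B).W1 j k * x k) + (gateFFN de Gn v β B).b1 j))
      + (gateFFN de Gn v β B).b2 i = _
  have hterm : ∀ j : Fin de,
      (gateFFN de Gn v β B).W2 i (Fin.castSucc j) *
        relu ((∑ k, (gateFFN de Gn v β B).W1 (Fin.castSucc j) k * x k)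
          + (gateFFN de Gn v β B).b1 (Fin.castSucc j))
      = if j = i then
          relu (x i + (if Gn (i : ℕ) then S + β - B else B)) else 0 := by
    intro j
    rw [hin]
    have hjde : ¬((Fin.castSucc j : ℕ) = de) := by
      have := j.isLt
      simp only [Fin.coe_castSucc]
      omega
    have hW2 : (gateFFN de Gn v β B).W2 i (Fin.castSucc j)
        = if (j : ℕ) = (i : ℕ) then (1:ℝ) else 0 := by
      show (if ((Fin.castSucc j : ℕ)) = ((i : ℕ)) then (1:ℝ)
        else if (((Fin.castSucc j : ℕ)) = de ∧ Gn (i : ℕ)) then -1 else 0) = _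
      simp only [Fin.coe_castSucc]
      by_cases h : (j : ℕ) = (i : ℕ)
      · simp [h]
      · simp only [h, if_false]
        rw [if_neg]
        simp only [Fin.coe_castSucc] at hjde
        exact fun hc => hjde hc.1
    rw [hW2]
    by_cases h : j = i
    · subst h
      have hcond : ((Fin.castSucc j : ℕ) = de ∨ Gn ((Fin.castSucc j : ℕ)))
          ↔ (Gn ((j : ℕ)) = true) := by
        simp only [Fin.coe_castSucc]
        constructor
        · rintro (h' | h')
          · exact absurd h' (by simpa using hjde)
          · exact h'
        · exact fun h' => Or.inr h'
      have hds : (∑ k : Fin de,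
          (if ((Fin.castSucc j : ℕ)) = (k : ℕ) then (1:ℝ) else 0) * x k) = x j := by
        simpa only [Fin.coe_castSucc] using hdelta j
      rw [hds]
      simp only [if_pos rfl, one_mul]
      have hjde' : ¬((j : ℕ) = de) := by simpa only [Fin.coe_castSucc] using hjde
      by_cases hg : Gn ((j : ℕ)) <;>
        simp [Fin.coe_castSucc, hg, hjde']
    · have : ¬((j : ℕ) = (i : ℕ)) := fun hh => h (Fin.ext hh)
      simp [this, h]
  rw [Fin.sum_univ_castSucc]
  rw [Finset.sum_congr rfl (fun j _ => hterm j)]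
  rw [Finset.sum_ite_eq' Finset.univ i
    (fun _ => relu (x i + (if Gn (i : ℕ) then S + β - B else B)))]
  have hlastin : (∑ k, (gateFFN de Gn v β B).W1 (Fin.last de) k * x k)
      + (gateFFN de Gn v β B).b1 (Fin.last de) = S + β - B := by
    rw [hin]
    have h1 : (∑ k : Fin de,
        (if ((Fin.last de : ℕ)) = (k : ℕ) then (1:ℝ) else 0) * x k) = 0 := by
      apply Finset.sum_eq_zero
      intro k _
      rw [if_neg, zero_mul]
      have := k.isLt
      simp only [Fin.val_last]
      omega
    rw [h1, if_pos (Or.inl (by simp [Fin.val_last])), zero_add]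
  rw [hlastin]
  have hW2last : (gateFFN de Gn v β B).W2 i (Fin.last de)
      = if Gn ((i : ℕ)) then (-1 : ℝ) else 0 := by
    show (if ((Fin.last de : ℕ)) = ((i : ℕ)) then (1:ℝ)
      else if (((Fin.last de : ℕ)) = de ∧ Gn (i : ℕ)) then -1 else 0) = _
    have hi := i.isLt
    rw [if_neg (by simp only [Fin.val_last]; omega)]
    by_cases hg : Gn ((i : ℕ)) <;> simp [Fin.val_last, hg]
  rw [hW2last]
  show _ + _ + (if Gn ((i : ℕ)) then (0:ℝ) else -B) = _
  by_cases hg : Gn ((i : ℕ)) <;> simp [hg] <;> ring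

lemma gateFFN_eval_on (de : ℕ) (Gn : ℕ → Bool) (v : Fin de → ℝ) (β B : ℝ)
    (x : Fin de → ℝ) (hB : ∀ k, |x k| ≤ B) (h0 : 0 ≤ B)
    (hu : 2 * B ≤ (∑ k, v k * x k) + β) (i : Fin de) :
    (gateFFN de Gn v β B).eval x i = x i := by
  rw [gateFFN_eval_eq]
  have hxi := abs_le.1 (hB i)
  by_cases hg : Gn ((i : ℕ))
  · rw [if_pos hg, if_pos hg,
      relu_of_nonneg (by linarith [hxi.1]),
      relu_of_nonneg (by linarith)]
    ring
  · rw [if_neg hg, if_neg hg, relu_of_nonneg (by linarith [hxi.1])]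
    ring

lemma gateFFN_eval_off (de : ℕ) (Gn : ℕ → Bool) (v : Fin de → ℝ) (β B : ℝ)
    (x : Fin de → ℝ) (hB : ∀ k, |x k| ≤ B) (h0 : 0 ≤ B)
    (hu : (∑ k, v k * x k) + β ≤ 0) (i : Fin de) :
    (gateFFN de Gn v β B).eval x i = if Gn ((i : ℕ)) then 0 else x i := by
  rw [gateFFN_eval_eq]
  have hxi := abs_le.1 (hB i)
  by_cases hg : Gn ((i : ℕ))
  · rw [if_pos hg, if_pos hg, if_pos hg,
      relu_of_nonpos (by linarith [hxi.2]),
      relu_of_nonpos (by linarith)]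
    ring
  · rw [if_neg hg, if_neg hg, if_neg hg,
      relu_of_nonneg (by linarith [hxi.1])]
    ring

lemma gateFFN_wnorm_le (de : ℕ) (Gn : ℕ → Bool) (v : Fin de → ℝ) (β B M : ℝ)
    (hM1 : 1 ≤ M) (hB0 : 0 ≤ B) (hv : ∀ k, 1 + |v k| ≤ M)
    (hβ : |β| + B ≤ M) (hBM : B ≤ M) :
    (gateFFN de Gn v β B).wnorm ≤ M := by
  have hM0 : (0:ℝ) ≤ M := zero_le_one.trans hM1
  show matSup _ ⊔ _ ⊔ matSup _ ⊔ _ ≤ M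
  refine sup_le (sup_le (sup_le ?_ ?_) ?_) ?_
  · apply Real.iSup_le _ hM0
    intro j
    apply Real.iSup_le _ hM0
    intro k
    show |(if (j : ℕ) = (k : ℕ) then (1:ℝ) else 0) +
      (if ((j : ℕ) = de ∨ Gn (j : ℕ)) then v k else 0)| ≤ M
    calc |(if (j : ℕ) = (k : ℕ) then (1:ℝ) else 0) +
        (if ((j : ℕ) = de ∨ Gn (j : ℕ)) then v k else 0)|
        ≤ |(if (j : ℕ) = (k : ℕ) then (1:ℝ) else 0)| +
          |(if ((j : ℕ) = de ∨ Gn (j : ℕ)) then v k else 0)| := abs_add_le _ _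
      _ ≤ 1 + |v k| := by
          have e1 : |(if (j : ℕ) = (k : ℕ) then (1:ℝ) else 0)| ≤ 1 := by
            split <;> norm_num
          have e2 : |(if ((j : ℕ) = de ∨ Gn (j : ℕ)) then v k else 0)| ≤ |v k| := by
            split
            · exact le_rfl
            · simp [abs_nonneg]
          linarith
      _ ≤ M := hv k
  · apply Real.iSup_le _ hM0
    intro j
    show |if ((j : ℕ) = de ∨ Gn (j : ℕ)) then β - B else B| ≤ M
    split
    · calc |β - B| ≤ |β| + |B| := abs_sub _ _
        _ = |β| + B := by rw [abs_of_nonneg hB0]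
        _ ≤ M := hβ
    · rw [abs_of_nonneg hB0]; exact hBM
  · apply Real.iSup_le _ hM0
    intro i
    apply Real.iSup_le _ hM0
    intro j
    show |if (j : ℕ) = (i : ℕ) then (1:ℝ)
      else if ((j : ℕ) = de ∧ Gn (i : ℕ)) then -1 else 0| ≤ M
    split
    · simpa using hM1
    · split
      · simpa using hM1
      · simpa using hM0
  · apply Real.iSup_le _ hM0
    intro i
    show |if Gn ((i : ℕ)) then (0:ℝ) else -B| ≤ M
    split
    · simpa using hM0
    · rw [abs_neg, abs_of_nonneg hB0]; exact hBM

/-- `φ(s) = cos(sπ/(2ℓ)) - sin(sπ/(2ℓ))`. -/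
def phiFn (ℓ s : ℕ) : ℝ :=
  Real.cos ((s : ℝ) * Real.pi / (2 * (ℓ : ℝ)))
    - Real.sin ((s : ℝ) * Real.pi / (2 * (ℓ : ℝ)))

lemma phiFn_abs_le (ℓ s : ℕ) : |phiFn ℓ s| ≤ 2 := by
  unfold phiFn
  set θ := (s : ℝ) * Real.pi / (2 * (ℓ : ℝ))
  rw [abs_le]
  constructor <;>
    nlinarith [Real.neg_one_le_cos θ, Real.cos_le_one θ,
      Real.neg_one_le_sin θ, Real.sin_le_one θ]

lemma theta_le_pi_div_two {ℓ s : ℕ} (hl : 1 ≤ ℓ) (h : s ≤ ℓ) :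
    (s : ℝ) * Real.pi / (2 * (ℓ : ℝ)) ≤ Real.pi / 2 := by
  have hlpos : (0:ℝ) < (ℓ : ℝ) := by exact_mod_cast hl
  have hs : (s : ℝ) ≤ (ℓ : ℝ) := by exact_mod_cast h
  have hpi := Real.pi_pos
  rw [div_le_div_iff₀ (by positivity) (by norm_num)]
  nlinarith

lemma phiFn_anti {ℓ s s' : ℕ} (hl : 1 ≤ ℓ) (h : s ≤ s') (h' : s' ≤ ℓ) :
    phiFn ℓ s' ≤ phiFn ℓ s := by
  have hlpos : (0:ℝ) < (ℓ : ℝ) := by exact_mod_cast hl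
  have hpi := Real.pi_pos
  set θa := (s : ℝ) * Real.pi / (2 * (ℓ : ℝ)) with hθa
  set θb := (s' : ℝ) * Real.pi / (2 * (ℓ : ℝ)) with hθb
  have hss : (s : ℝ) ≤ (s' : ℝ) := by exact_mod_cast h
  have hab : θa ≤ θb := by
    rw [hθa, hθb]
    gcongr

  have h0a : 0 ≤ θa := by positivity
  have hb2 : θb ≤ Real.pi / 2 := theta_le_pi_div_two hl h'
  have hc := Real.cos_le_cos_of_nonneg_of_le_pi h0a (by linarith) hab
  have hs := Real.sin_le_sin_of_le_of_le_pi_div_two (by linarith) hb2 hab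
  unfold phiFn
  rw [← hθa, ← hθb]
  linarith

lemma phiFn_gap {ℓ k : ℕ} (hl : 1 ≤ ℓ) (h : k + 1 ≤ ℓ) :
    phiFn ℓ (k + 1) + Real.pi / (4 * (ℓ : ℝ)) ≤ phiFn ℓ k := by
  have hlpos : (0:ℝ) < (ℓ : ℝ) := by exact_mod_cast hl
  have hl1 : (1:ℝ) ≤ (ℓ : ℝ) := by exact_mod_cast hl
  have hpi := Real.pi_pos
  set δ := Real.pi / (4 * (ℓ : ℝ)) with hδdef
  have hδpos : 0 < δ := by positivity
  have hδ1 : δ ≤ 1 := by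
    rw [hδdef, div_le_one (by positivity)]
    nlinarith [Real.pi_le_four]
  have ha : ((k : ℝ)) * Real.pi / (2 * (ℓ : ℝ)) = (2 * (k : ℝ)) * δ := by
    rw [hδdef]; field_simp; ring
  have hb : (((k + 1 : ℕ)) : ℝ) * Real.pi / (2 * (ℓ : ℝ))
      = (2 * (k : ℝ) + 2) * δ := by
    push_cast; rw [hδdef]; field_simp; ring
  have e1 : Real.cos ((2 * (k : ℝ)) * δ) - Real.cos ((2 * (k : ℝ) + 2) * δ)
      = 2 * Real.sin ((2 * (k : ℝ) + 1) * δ) * Real.sin δ := by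
    rw [Real.cos_sub_cos]
    have h1 : ((2 * (k : ℝ)) * δ + (2 * (k : ℝ) + 2) * δ) / 2
        = (2 * (k : ℝ) + 1) * δ := by ring
    have h2 : ((2 * (k : ℝ)) * δ - (2 * (k : ℝ) + 2) * δ) / 2 = -δ := by ring
    rw [h1, h2, Real.sin_neg]; ring
  have e2 : Real.sin ((2 * (k : ℝ) + 2) * δ) - Real.sin ((2 * (k : ℝ)) * δ)
      = 2 * Real.sin δ * Real.cos ((2 * (k : ℝ) + 1) * δ) := by
    rw [Real.sin_sub_sin]
    have h1 : ((2 * (k : ℝ) + 2) * δ - (2 * (k : ℝ)) * δ) / 2 = δ := by ring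
    have h2 : ((2 * (k : ℝ) + 2) * δ + (2 * (k : ℝ)) * δ) / 2
        = (2 * (k : ℝ) + 1) * δ := by ring
    rw [h1, h2]
  set m := (2 * (k : ℝ) + 1) * δ with hm
  have hm0 : 0 ≤ m := by positivity
  have hk1 : (k : ℝ) + 1 ≤ (ℓ : ℝ) := by exact_mod_cast h
  have hm2 : m ≤ Real.pi / 2 := by
    have : (2 * (k : ℝ) + 1) * δ ≤ (2 * (ℓ : ℝ)) * δ := by
      apply mul_le_mul_of_nonneg_right _ hδpos.le
      linarith
    have h2ld : (2 * (ℓ : ℝ)) * δ = Real.pi / 2 := by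
      rw [hδdef]; field_simp; ring
    rw [hm]; linarith [h2ld ▸ this]
  have hsinm : 0 ≤ Real.sin m :=
    Real.sin_nonneg_of_nonneg_of_le_pi hm0 (by linarith)
  have hcosm : 0 ≤ Real.cos m :=
    Real.cos_nonneg_of_mem_Icc ⟨by linarith, hm2⟩
  have hsum1 : 1 ≤ Real.sin m + Real.cos m := by
    nlinarith [Real.sin_sq_add_cos_sq m, Real.sin_le_one m, Real.cos_le_one m]
  have hsinδ : δ / 2 ≤ Real.sin δ := by
    nlinarith [Real.sin_gt_sub_cube hδpos, sq_nonneg δ]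
  have hsinδ0 : 0 ≤ Real.sin δ := by linarith
  unfold phiFn
  rw [ha, hb]
  nlinarith [mul_nonneg (by linarith : (0:ℝ) ≤ Real.sin δ - δ / 2)
    (by linarith : (0:ℝ) ≤ Real.sin m + Real.cos m - 1)]

end GatingAux

set_option maxHeartbeats 1600000 in
/-- Gating Lemma: two-layer feed-forward networks that zero out
coordinates `r₁,…,r₂` (1-indexed) of all tokens outside a prefix `{1,…,k₁}`,
resp. outside a suffix `{k₂,…,ℓ}`. Here `d_embed = e + 5 ≥ 5`. -/
theorem gating_lemma :
    ∃ C : ℝ, 0 < C ∧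
      ∀ (e ℓ : ℕ) (H : Matrix (Fin (e + 5)) (Fin ℓ) ℝ), IsEmbedG e ℓ H →
      ∀ r₁ r₂ k₁ k₂ : ℕ, 1 ≤ r₁ → r₁ ≤ r₂ → r₂ ≤ e + 2 →
        1 ≤ k₁ → k₁ ≤ ℓ → 1 ≤ k₂ → k₂ ≤ ℓ →
      ∃ (w : ℕ) (f₁ f₂ : TwoLayerFFN (e + 5) w),
        f₁.wnorm ≤ C * (ℓ : ℝ) * matSup H ∧
        f₂.wnorm ≤ C * (ℓ : ℝ) * matSup H ∧
        (∀ t : Fin ℓ,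
          f₁.eval (fun r => H r t) = fun i =>
            if (t : ℕ) < k₁ then H i t
            else if r₁ ≤ (i : ℕ) + 1 ∧ (i : ℕ) + 1 ≤ r₂ then 0 else H i t) ∧
        (∀ t : Fin ℓ,
          f₂.eval (fun r => H r t) = fun i =>
            if k₂ ≤ (t : ℕ) + 1 then H i t
            else if r₁ ≤ (i : ℕ) + 1 ∧ (i : ℕ) + 1 ≤ r₂ then 0 else H i t) := by
  refine ⟨100, by norm_num, ?_⟩
  intro e ℓ H hH r₁ r₂ k₁ k₂ hr1 hr12 hr2 hk11 hk1l hk21 hk2l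
  obtain ⟨hHcos, hHsin, hHone⟩ := hH
  have hℓ : 1 ≤ ℓ := le_trans hk11 hk1l
  have hlR1 : (1:ℝ) ≤ (ℓ : ℝ) := by exact_mod_cast hℓ
  have hlR0 : (0:ℝ) < (ℓ : ℝ) := by linarith
  have hpi := Real.pi_pos
  set B := matSup H with hBdef
  have habs : ∀ (i : Fin (e + 5)) (t : Fin ℓ), |H i t| ≤ B := by
    intro i t
    calc |H i t| ≤ ⨆ t', |H i t'| := le_ciSup (f := fun t' => |H i t'|) (Finite.bddAbove_range _) t
      _ ≤ B := le_ciSup (Finite.bddAbove_range fun i' => ⨆ t', |H i' t'|) i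
  have hB1 : 1 ≤ B := by
    have h := habs ⟨e + 4, by omega⟩ ⟨0, hℓ⟩
    rw [hHone ⟨0, hℓ⟩] at h
    simpa using h
  have hB0 : (0:ℝ) ≤ B := by linarith
  set d := Real.pi / (8 * (ℓ : ℝ)) with hddef
  have h2d : Real.pi / (4 * (ℓ : ℝ)) = 2 * d := by rw [hddef]; ring
  have hd0 : 0 < d := by positivity
  have hd1 : d ≤ 1 := by
    rw [hddef, div_le_one (by positivity)]
    nlinarith [Real.pi_le_four]
  set a := 6 * B * (ℓ : ℝ) with hadef
  have ha0 : 0 ≤ a := by positivity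
  have had : 2 * B ≤ a * d := by
    have : a * d = 6 / 8 * Real.pi * B := by
      rw [hadef, hddef]; field_simp
    rw [this]
    nlinarith [Real.pi_gt_three]
  set i2 : Fin (e + 5) := ⟨e + 2, by omega⟩ with hi2
  set i3 : Fin (e + 5) := ⟨e + 3, by omega⟩ with hi3
  have hi23 : i2 ≠ i3 := by simp [hi2, hi3, Fin.ext_iff]
  set Gn : ℕ → Bool := fun n => decide (r₁ ≤ n + 1 ∧ n + 1 ≤ r₂) with hGn
  -- the two linear functionals
  set v1 : Fin (e + 5) → ℝ := fun k => if k = i2 then a else if k = i3 then -a else 0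
    with hv1
  set v2 : Fin (e + 5) → ℝ := fun k => if k = i2 then -a else if k = i3 then a else 0
    with hv2
  set c1 : ℝ := phiFn ℓ k₁ - d with hc1
  set c2 : ℝ := phiFn ℓ k₂ + d with hc2
  set β1 : ℝ := -(a * c1) with hβ1
  set β2 : ℝ := a * c2 with hβ2
  -- column values
  have hcolphi : ∀ t : Fin ℓ,
      H i2 t - H i3 t = phiFn ℓ ((t : ℕ) + 1) := by
    intro t
    have hc : H i2 t = Real.cos ((((t : ℕ) : ℝ) + 1) * Real.pi / (2 * ℓ)) :=
      hHcos t
    have hs : H i3 t = Real.sin ((((t : ℕ) : ℝ) + 1) * Real.pi / (2 * ℓ)) :=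
      hHsin t
    rw [hc, hs]
    unfold phiFn
    push_cast
    norm_num
  have hsum1 : ∀ t : Fin ℓ,
      (∑ k, v1 k * H k t) = a * phiFn ℓ ((t : ℕ) + 1) := by
    intro t
    have hterm : ∀ k : Fin (e + 5), v1 k * H k t =
        (if k = i2 then a * H k t else 0) + (if k = i3 then -a * H k t else 0) := by
      intro k
      by_cases h2 : k = i2
      · have h3 : ¬(k = i3) := by rw [h2]; exact hi23
        simp [hv1, h2, h3, hi23]
      · by_cases h3 : k = i3 <;> simp [hv1, h2, h3, hi23.symm]
    rw [Finset.sum_congr rfl fun k _ => hterm k, Finset.sum_add_distrib,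
      Finset.sum_ite_eq' Finset.univ i2 (fun k => a * H k t),
      Finset.sum_ite_eq' Finset.univ i3 (fun k => -a * H k t)]
    simp only [Finset.mem_univ, if_true]
    rw [← hcolphi t]; ring
  have hsum2 : ∀ t : Fin ℓ,
      (∑ k, v2 k * H k t) = -(a * phiFn ℓ ((t : ℕ) + 1)) := by
    intro t
    have hterm : ∀ k : Fin (e + 5), v2 k * H k t =
        (if k = i2 then -a * H k t else 0) + (if k = i3 then a * H k t else 0) := by
      intro k
      by_cases h2 : k = i2
      · have h3 : ¬(k = i3) := by rw [h2]; exact hi23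
        simp [hv2, h2, h3, hi23]
      · by_cases h3 : k = i3 <;> simp [hv2, h2, h3, hi23.symm]
    rw [Finset.sum_congr rfl fun k _ => hterm k, Finset.sum_add_distrib,
      Finset.sum_ite_eq' Finset.univ i2 (fun k => -a * H k t),
      Finset.sum_ite_eq' Finset.univ i3 (fun k => a * H k t)]
    simp only [Finset.mem_univ, if_true]
    rw [← hcolphi t]; ring
  -- gating inequalities
  have hon1 : ∀ t : Fin ℓ, (t : ℕ) < k₁ →
      2 * B ≤ a * phiFn ℓ ((t : ℕ) + 1) + β1 := by
    intro t ht
    have hφ : phiFn ℓ k₁ ≤ phiFn ℓ ((t : ℕ) + 1) := phiFn_anti hℓ ht hk1l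
    have := mul_nonneg ha0 (sub_nonneg.2 hφ)
    rw [hβ1, hc1]
    nlinarith
  have hoff1 : ∀ t : Fin ℓ, ¬((t : ℕ) < k₁) →
      a * phiFn ℓ ((t : ℕ) + 1) + β1 ≤ 0 := by
    intro t ht
    have htl : (t : ℕ) + 1 ≤ ℓ := t.isLt
    have hk1t : k₁ + 1 ≤ (t : ℕ) + 1 := by omega
    have hφ1 : phiFn ℓ ((t : ℕ) + 1) ≤ phiFn ℓ (k₁ + 1) := phiFn_anti hℓ hk1t htl
    have hφ2 : phiFn ℓ (k₁ + 1) + Real.pi / (4 * (ℓ : ℝ)) ≤ phiFn ℓ k₁ :=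
      phiFn_gap hℓ (by omega)
    rw [h2d] at hφ2
    have hle : phiFn ℓ ((t : ℕ) + 1) - c1 ≤ 0 := by rw [hc1]; linarith
    have := mul_nonneg ha0 (by linarith : 0 ≤ c1 - phiFn ℓ ((t : ℕ) + 1))
    rw [hβ1]
    nlinarith
  have hon2 : ∀ t : Fin ℓ, k₂ ≤ (t : ℕ) + 1 →
      2 * B ≤ -(a * phiFn ℓ ((t : ℕ) + 1)) + β2 := by
    intro t ht
    have htl : (t : ℕ) + 1 ≤ ℓ := t.isLt
    have hφ : phiFn ℓ ((t : ℕ) + 1) ≤ phiFn ℓ k₂ := phiFn_anti hℓ ht htl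
    have := mul_nonneg ha0 (sub_nonneg.2 hφ)
    rw [hβ2, hc2]
    nlinarith
  have hoff2 : ∀ t : Fin ℓ, ¬(k₂ ≤ (t : ℕ) + 1) →
      -(a * phiFn ℓ ((t : ℕ) + 1)) + β2 ≤ 0 := by
    intro t ht
    have ht' : (t : ℕ) + 1 ≤ k₂ - 1 := by omega
    have hk2' : (k₂ - 1) + 1 = k₂ := by omega
    have hφ1 : phiFn ℓ (k₂ - 1) ≤ phiFn ℓ ((t : ℕ) + 1) :=
      phiFn_anti hℓ ht' (by omega)
    have hφ2 : phiFn ℓ ((k₂ - 1) + 1) + Real.pi / (4 * (ℓ : ℝ)) ≤ phiFn ℓ (k₂ - 1) :=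
      phiFn_gap hℓ (by omega)
    rw [hk2', h2d] at hφ2
    have hle : c2 - phiFn ℓ ((t : ℕ) + 1) ≤ 0 := by rw [hc2]; linarith
    have := mul_nonneg ha0 (by linarith : 0 ≤ phiFn ℓ ((t : ℕ) + 1) - c2)
    rw [hβ2]
    nlinarith
  -- weight norm bounds
  set M : ℝ := 100 * (ℓ : ℝ) * B with hM
  have hφk1 := phiFn_abs_le ℓ k₁
  have hφk2 := phiFn_abs_le ℓ k₂
  obtain ⟨hφk1a, hφk1b⟩ := abs_le.1 hφk1
  obtain ⟨hφk2a, hφk2b⟩ := abs_le.1 hφk2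
  have hc1abs : |c1| ≤ 3 := by
    rw [hc1, abs_le]; constructor <;> nlinarith
  have hc2abs : |c2| ≤ 3 := by
    rw [hc2, abs_le]; constructor <;> nlinarith
  have hM1 : 1 ≤ M := by rw [hM]; nlinarith
  have hvabs : ∀ (v : Fin (e + 5) → ℝ), (∀ k, |v k| ≤ a) → ∀ k, 1 + |v k| ≤ M := by
    intro v hv k
    have := hv k
    rw [hM, hadef] at *
    nlinarith
  have hv1a : ∀ k, |v1 k| ≤ a := by
    intro k
    rw [hv1]
    by_cases h2 : k = i2
    · simp [h2, abs_of_nonneg ha0]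
    · by_cases h3 : k = i3 <;>
        simp [h2, h3, hi23.symm, abs_of_nonneg ha0, ha0]
  have hv2a : ∀ k, |v2 k| ≤ a := by
    intro k
    rw [hv2]
    by_cases h2 : k = i2
    · simp [h2, abs_of_nonneg ha0]
    · by_cases h3 : k = i3 <;>
        simp [h2, h3, hi23.symm, abs_of_nonneg ha0, ha0]
  have hβM : ∀ (β c : ℝ), |β| = |a * c| → |c| ≤ 3 → |β| + B ≤ M := by
    intro β c hβc hcle
    rw [hβc, abs_mul, abs_of_nonneg ha0, hM, hadef]
    have hca := abs_nonneg c
    nlinarith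
  have hβ1M : |β1| + B ≤ M := hβM β1 c1 (by rw [hβ1, abs_neg]) hc1abs
  have hβ2M : |β2| + B ≤ M := hβM β2 c2 (by rw [hβ2]) hc2abs
  have hBM : B ≤ M := by rw [hM]; nlinarith
  -- assemble
  refine ⟨(e + 5) + 1, gateFFN (e + 5) Gn v1 β1 B, gateFFN (e + 5) Gn v2 β2 B, ?_, ?_, ?_, ?_⟩
  · exact gateFFN_wnorm_le (e + 5) Gn v1 β1 B M hM1 hB0 (hvabs v1 hv1a) hβ1M hBM
  · exact gateFFN_wnorm_le (e + 5) Gn v2 β2 B M hM1 hB0 (hvabs v2 hv2a) hβ2M hBM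
  · intro t
    funext i
    by_cases ht : (t : ℕ) < k₁
    · rw [if_pos ht]
      exact gateFFN_eval_on (e + 5) Gn v1 β1 B (fun r => H r t)
        (fun k => habs k t) hB0 (by rw [hsum1 t]; exact hon1 t ht) i
    · rw [if_neg ht]
      rw [gateFFN_eval_off (e + 5) Gn v1 β1 B (fun r => H r t)
        (fun k => habs k t) hB0 (by rw [hsum1 t]; exact hoff1 t ht) i]
      by_cases hg : r₁ ≤ (i : ℕ) + 1 ∧ (i : ℕ) + 1 ≤ r₂ <;>
        simp [hGn, hg] <;> exact fun h => absurd h (by omega)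
  · intro t
    funext i
    by_cases ht : k₂ ≤ (t : ℕ) + 1
    · rw [if_pos ht]
      exact gateFFN_eval_on (e + 5) Gn v2 β2 B (fun r => H r t)
        (fun k => habs k t) hB0 (by rw [hsum2 t]; exact hon2 t ht) i
    · rw [if_neg ht]
      rw [gateFFN_eval_off (e + 5) Gn v2 β2 B (fun r => H r t)
        (fun k => habs k t) hB0 (by rw [hsum2 t]; exact hoff2 t ht) i]
      by_cases hg : r₁ ≤ (i : ℕ) + 1 ∧ (i : ℕ) + 1 ≤ r₂ <;>
        simp [hGn, hg] <;> exact fun h => absurd h (by omega)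

end
end Paper
end

section
/- (Decrementing Lemma) Let d_embed ≥ 5 and H = [h_t]_{1≤t≤ℓ} ∈ ℝ^{d_embed×ℓ} be an embedding matrix with rows d_embed−2, d_embed−1 equal to the positional encodings 𝓘_t and last row all ones. Then for any 1 ≤ r₁ ≤ r₂ ≤ d_embed−3, any 1 ≤ k₁, k₂ ≤ ℓ, and any M > 0, there exists a six-layer residual feed-forward ReLU network FFN with ‖θ_FFN‖_∞ ≤ O(ℓ M) such that FFN(h_t) + h_t = h_t for t ∈ {1,…,k₁} ∪ {k₂,…,ℓ}, while for all other t, FFN(h_t) + h_t subtracts M from coordinates r₁ through r₂ of h_t and leaves all other coordinates unchanged. -/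
open scoped BigOperators
open Metric Set MeasureTheory
open scoped Matrix

namespace Paper

noncomputable section

-- AUX START
def layerStep {w : ℕ} (W : Matrix (Fin w) (Fin w) ℝ) (b : Fin w → ℝ) (h : Fin w → ℝ) :
    Fin w → ℝ := fun i => relu (∑ j, W i j * h j + b i)

lemma eval6 {de w : ℕ} (f : FFN de w 6) (x : Fin de → ℝ) :
    f.eval x = fun i => ∑ j, f.Wout i j *
      layerStep (f.Wmid 5) (f.bmid 5) (layerStep (f.Wmid 4) (f.bmid 4)
        (layerStep (f.Wmid 3) (f.bmid 3) (layerStep (f.Wmid 2) (f.bmid 2)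
          (layerStep (f.Wmid 1) (f.bmid 1) (layerStep (f.Wmid 0) (f.bmid 0)
            (fun i => relu (∑ j, f.Win i j * x j + f.bin i))))))) j + f.bout i := by
  have h6 : List.finRange 6 = [0,1,2,3,4,5] := by decide
  simp only [FFN.eval, h6, List.foldl_cons, List.foldl_nil, layerStep]

lemma sum_ite_one {n : ℕ} (c : Fin n) (A : ℝ) (x : Fin n → ℝ) :
    ∑ j, (if j = c then A else 0) * x j = A * x c := by simp [ite_mul]

lemma sum_ite_two {n : ℕ} {c d : Fin n} (h : c ≠ d) (A B : ℝ) (x : Fin n → ℝ) :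
    ∑ j, (if j = c then A else if j = d then B else 0) * x j = A * x c + B * x d := by
  have key : ∀ j, (if j = c then A else if j = d then B else 0) * x j
      = (if j = c then A else 0) * x j + (if j = d then B else 0) * x j := by
    intro j
    by_cases h1 : j = c
    · subst h1; simp [h]
    · simp [h1]
  rw [Finset.sum_congr rfl (fun j _ => key j), Finset.sum_add_distrib,
    sum_ite_one, sum_ite_one]

lemma jordan (L : ℕ) (hL : 1 ≤ L) (D : ℝ) (h1 : 1/2 ≤ D) (h2 : D ≤ L) :
    1/(2*(L:ℝ)) ≤ Real.sin (D * (Real.pi/(2*L))) := by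
  have hLpos : (0:ℝ) < L := by exact_mod_cast hL
  have hπ := Real.pi_pos
  have hx0 : 0 ≤ D * (Real.pi/(2*(L:ℝ))) := by positivity
  have hx1 : D * (Real.pi/(2*(L:ℝ))) ≤ Real.pi/2 := by
    have h := mul_le_mul_of_nonneg_right h2 (le_of_lt (by positivity : (0:ℝ) < Real.pi/(2*L)))
    calc D * (Real.pi/(2*(L:ℝ))) ≤ (L:ℝ) * (Real.pi/(2*L)) := h
      _ = Real.pi/2 := by field_simp
  have hsin := Real.mul_le_sin hx0 hx1
  have he : 2/Real.pi * (D * (Real.pi/(2*(L:ℝ)))) = D/L := by field_simp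
  rw [he] at hsin
  refine le_trans ?_ hsin
  rw [div_le_div_iff₀ (by positivity) hLpos]
  nlinarith
-- AUX END

set_option maxHeartbeats 4000000 in
/-- Decrementing Lemma: a six-layer residual feed-forward network
subtracting `M` from coordinates `r₁,…,r₂` (1-indexed) of the tokens strictly
between the prefix `{1,…,k₁}` and the suffix `{k₂,…,ℓ}`. Here `d_embed = e + 5`. -/
theorem decrementing_lemma :
    ∃ C : ℝ, 0 < C ∧
      ∀ (e ℓ : ℕ) (H : Matrix (Fin (e + 5)) (Fin ℓ) ℝ), IsEmbedG e ℓ H →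
      ∀ r₁ r₂ k₁ k₂ : ℕ, 1 ≤ r₁ → r₁ ≤ r₂ → r₂ ≤ e + 2 →
        1 ≤ k₁ → k₁ ≤ ℓ → 1 ≤ k₂ → k₂ ≤ ℓ →
      ∀ M : ℝ, 0 < M →
      ∃ (w : ℕ) (f : FFN (e + 5) w 6),
        f.wnorm ≤ C * (ℓ : ℝ) * M ∧
        ∀ t : Fin ℓ,
          (fun i => f.eval (fun r => H r t) i + H i t) = fun i =>
            if (t : ℕ) < k₁ ∨ k₂ ≤ (t : ℕ) + 1 then H i t
            else if r₁ ≤ (i : ℕ) + 1 ∧ (i : ℕ) + 1 ≤ r₂ then H i t - M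
            else H i t := by
  refine ⟨1, one_pos, ?_⟩
  intro e ℓ H hH r₁ r₂ k₁ k₂ _ _ _ hk11 hk1ℓ hk21 hk2ℓ M hM
  obtain ⟨hH2, hH3, -⟩ := hH
  have hℓ1 : 1 ≤ ℓ := le_trans hk11 hk1ℓ
  have hℓpos : (0:ℝ) < ℓ := by exact_mod_cast hℓ1
  have hπ := Real.pi_pos
  set m : ℝ := min 1 M with hmdef
  have hm0 : 0 < m := lt_min one_pos hM
  have hmM : m ≤ M := min_le_right _ _
  have hm1 : m ≤ 1 := min_le_left _ _
  set β : ℝ := (ℓ:ℝ) * M with hβdef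
  have hβ0 : 0 < β := mul_pos hℓpos hM
  have hℓ1R : (1:ℝ) ≤ (ℓ:ℝ) := by exact_mod_cast hℓ1
  have hmβ : m ≤ β := le_trans hmM (by rw [hβdef]; nlinarith only [hℓ1R, hM.le])
  set B₁ : ℝ := (ℓ:ℝ) * M * m / 2 with hB1def
  set B₂ : ℝ := (ℓ:ℝ) * M * m^2 / 2 with hB2def
  have hB10 : 0 < B₁ := by rw [hB1def]; positivity
  have hB20 : 0 < B₂ := by rw [hB2def]; positivity
  set p : ℝ := min 1 ((ℓ:ℝ)*M) with hpdef
  have hp0 : 0 < p := lt_min one_pos (by positivity)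
  have hpβ : p ≤ (ℓ:ℝ)*M := min_le_right _ _
  set Y : ℝ := B₂ * p^4 with hYdef
  have hY0 : 0 < Y := by rw [hYdef]; positivity
  set n : ℕ := ⌈1/((ℓ:ℝ)*Y)⌉₊ + 2 with hndef
  have hn0 : 0 < n := by omega
  have hn1 : 1 < n := by omega
  have hnn0 : (0:ℝ) < n := by exact_mod_cast hn0
  have hnY : 1/(ℓ:ℝ) ≤ (n:ℝ) * Y := by
    have h1 : 1/((ℓ:ℝ)*Y) ≤ (n:ℝ) := by
      refine le_trans (Nat.le_ceil _) ?_
      exact_mod_cast Nat.le_add_right _ 2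
    have h2 := mul_le_mul_of_nonneg_right h1 hY0.le
    calc 1/(ℓ:ℝ) = 1/((ℓ:ℝ)*Y) * Y := by field_simp
      _ ≤ (n:ℝ) * Y := h2
  set κ : ℝ := M / ((n:ℝ) * Y) with hκdef
  have hκ0 : 0 < κ := by rw [hκdef]; positivity
  have hκβ : κ ≤ (ℓ:ℝ)*M := by
    rw [hκdef, div_le_iff₀ (by positivity)]
    have h1 := mul_le_mul_of_nonneg_left hnY hℓpos.le
    rw [mul_one_div, div_self (ne_of_gt hℓpos)] at h1
    nlinarith only [h1, hM.le]
  set i0 : Fin n := ⟨0, hn0⟩ with hi0def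
  set i1 : Fin n := ⟨1, hn1⟩ with hi1def
  have hi01 : i0 ≠ i1 := by simp [hi0def, hi1def, Fin.ext_iff]
  set j2 : Fin (e+5) := ⟨e+2, by omega⟩ with hj2def
  set j3 : Fin (e+5) := ⟨e+3, by omega⟩ with hj3def
  have hj23 : j2 ≠ j3 := by simp [hj2def, hj3def, Fin.ext_iff]
  set φ₁ : ℝ := ((k₁:ℝ) + 1/2) * (Real.pi/(2*(ℓ:ℝ))) with hφ1def
  set φ₂ : ℝ := ((k₂:ℝ) - 1/2) * (Real.pi/(2*(ℓ:ℝ))) with hφ2def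
  obtain ⟨f, hfdef⟩ : ∃ f : FFN (e+5) n 6, f = {
    Win := fun i j =>
      if i = i0 then (if j = j2 then -(β*Real.sin φ₁) else if j = j3 then β*Real.cos φ₁ else 0)
      else if i = i1 then (if j = j2 then β*Real.sin φ₂ else if j = j3 then -(β*Real.cos φ₂) else 0)
      else 0,
    bin := fun _ => 0,
    Wmid := fun k i j =>
      if k = 0 then (if i = i0 then (if j = i0 then -β else 0)
                     else if i = i1 then (if j = i1 then -β else 0) else 0)
      else if k = 1 then (if i = i0 then (if j = i0 then -β else if j = i1 then -β else 0) else 0)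
      else if k = 5 then (if j = i0 then p else 0)
      else (if i = i0 then (if j = i0 then p else 0) else 0),
    bmid := fun k i =>
      if k = 0 then (if i = i0 ∨ i = i1 then B₁ else 0)
      else if k = 1 then (if i = i0 then B₂ else 0) else 0,
    Wout := fun i _ => if r₁ ≤ (i:ℕ)+1 ∧ (i:ℕ)+1 ≤ r₂ then -κ else 0,
    bout := fun _ => 0 } := ⟨_, rfl⟩
  have hLM0 : (0:ℝ) ≤ (ℓ:ℝ)*M := by positivity
  have hWin : f.Win = fun i j =>
      if i = i0 then (if j = j2 then -(β*Real.sin φ₁) else if j = j3 then β*Real.cos φ₁ else 0)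
      else if i = i1 then (if j = j2 then β*Real.sin φ₂ else if j = j3 then -(β*Real.cos φ₂) else 0)
      else 0 := by rw [hfdef]
  have hbin : f.bin = fun _ => 0 := by rw [hfdef]
  have hW0 : f.Wmid 0 = fun i j =>
      (if i = i0 then (if j = i0 then -β else 0)
       else if i = i1 then (if j = i1 then -β else 0) else 0) := by rw [hfdef]; rfl
  have hb0 : f.bmid 0 = fun i => (if i = i0 ∨ i = i1 then B₁ else 0) := by rw [hfdef]; rfl
  have hW1 : f.Wmid 1 = fun i j =>
      (if i = i0 then (if j = i0 then -β else if j = i1 then -β else 0) else 0) := by rw [hfdef]; rfl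
  have hb1 : f.bmid 1 = fun i => (if i = i0 then B₂ else 0) := by rw [hfdef]; rfl
  have hWm : ∀ k : Fin 6, k = 2 ∨ k = 3 ∨ k = 4 →
      f.Wmid k = fun i j => (if i = i0 then (if j = i0 then p else 0) else 0) := by
    intro k hk
    rcases hk with rfl | rfl | rfl <;> (rw [hfdef]; rfl)
  have hbm : ∀ k : Fin 6, k = 2 ∨ k = 3 ∨ k = 4 → f.bmid k = fun _ => (0:ℝ) := by
    intro k hk
    rcases hk with rfl | rfl | rfl <;> (rw [hfdef]; rfl)
  have hW5 : f.Wmid 5 = fun _ j => (if j = i0 then p else 0) := by rw [hfdef]; rfl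
  have hb5 : f.bmid 5 = fun _ => (0:ℝ) := by rw [hfdef]; rfl
  have hWout : f.Wout = fun (i : Fin (e+5)) (_ : Fin n) =>
      if r₁ ≤ (i:ℕ)+1 ∧ (i:ℕ)+1 ≤ r₂ then -κ else 0 := by
    rw [hfdef]
  have hbout : f.bout = fun _ => (0:ℝ) := by rw [hfdef]
  refine ⟨n, f, ?_, ?_⟩
  · -- weight norm bound
    have key : ∀ y : ℝ, |y| ≤ 1 → |β * y| ≤ (ℓ:ℝ)*M := by
      intro y hy
      rw [abs_mul, abs_of_pos hβ0, hβdef]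
      nlinarith only [abs_nonneg y, hy, hLM0]
    have hB1b : |B₁| ≤ (ℓ:ℝ)*M := by
      rw [abs_of_pos hB10, hB1def]; nlinarith only [hm1, hm0.le, hLM0]
    have hB2b : |B₂| ≤ (ℓ:ℝ)*M := by
      have hm2 : m^2 ≤ 1 := by nlinarith only [hm1, hm0.le]
      rw [abs_of_pos hB20, hB2def]; nlinarith only [hm2, hLM0]
    have hβb : |(-β)| ≤ (ℓ:ℝ)*M := by
      rw [abs_neg, abs_of_pos hβ0, hβdef]
    have hpb : |p| ≤ (ℓ:ℝ)*M := by rw [abs_of_pos hp0]; exact hpβ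
    have hκb : |(-κ)| ≤ (ℓ:ℝ)*M := by rw [abs_neg, abs_of_pos hκ0]; exact hκβ
    rw [show (1:ℝ)*(ℓ:ℝ)*M = (ℓ:ℝ)*M by ring, FFN.wnorm]
    refine sup_le (sup_le (sup_le (sup_le (sup_le ?_ ?_) ?_) ?_) ?_) ?_
    · simp only [hWin, matSup]
      refine Real.iSup_le (fun i => Real.iSup_le (fun j => ?_) hLM0) hLM0
      split_ifs
      all_goals first
        | (rw [abs_neg]; exact key _ (abs_le.mpr ⟨Real.neg_one_le_sin _, Real.sin_le_one _⟩))
        | (rw [abs_neg]; exact key _ (abs_le.mpr ⟨Real.neg_one_le_cos _, Real.cos_le_one _⟩))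
        | exact key _ (abs_le.mpr ⟨Real.neg_one_le_sin _, Real.sin_le_one _⟩)
        | exact key _ (abs_le.mpr ⟨Real.neg_one_le_cos _, Real.cos_le_one _⟩)
        | (rw [abs_zero]; try exact hLM0)
    · rw [hbin]
      refine Real.iSup_le (fun i => ?_) hLM0
      simp only [abs_zero]; exact hLM0
    · refine Real.iSup_le (fun k => ?_) hLM0
      rw [matSup]
      refine Real.iSup_le (fun i => Real.iSup_le (fun j => ?_) hLM0) hLM0
      simp only [hfdef]
      split_ifs
      all_goals first
        | (rw [abs_neg, abs_of_pos hβ0]; try exact le_of_eq hβdef)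
        | (rw [abs_of_pos hp0]; try exact hpβ)
        | (rw [abs_zero]; try exact hLM0)
    · refine Real.iSup_le (fun k => Real.iSup_le (fun i => ?_) hLM0) hLM0
      simp only [hfdef]
      split_ifs
      all_goals first
        | exact hB1b
        | exact hB2b
        | (rw [abs_zero]; try exact hLM0)
    · simp only [hWout, matSup]
      refine Real.iSup_le (fun i => Real.iSup_le (fun j => ?_) hLM0) hLM0
      split_ifs
      · exact hκb
      · simp only [abs_zero]; exact hLM0
    · rw [hbout]
      refine Real.iSup_le (fun i => ?_) hLM0
      simp only [abs_zero]; exact hLM0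
  · -- token evaluation
    intro t
    set θ : ℝ := (((t:ℕ):ℝ)+1) * (Real.pi/(2*(ℓ:ℝ))) with hθdef
    have hx2 : H j2 t = Real.cos θ := by rw [hθdef, ← mul_div_assoc]; exact hH2 t
    have hx3 : H j3 t = Real.sin θ := by rw [hθdef, ← mul_div_assoc]; exact hH3 t
    set aval := relu (β * Real.sin (θ - φ₁)) with havaldef
    set bval := relu (β * Real.sin (φ₂ - θ)) with hbvaldef
    set uval := relu (B₁ - β * aval) with huvaldef
    set vval := relu (B₁ - β * bval) with hvvaldef
    set gval := relu (B₂ - β * (uval + vval)) with hgvaldef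
    have haval0 : 0 ≤ aval := le_max_right _ _
    have hbval0 : 0 ≤ bval := le_max_right _ _
    have huval0 : 0 ≤ uval := le_max_right _ _
    have hvval0 : 0 ≤ vval := le_max_right _ _
    have hgval0 : 0 ≤ gval := le_max_right _ _
    have htℓ : ((t:ℕ):ℝ) + 1 ≤ (ℓ:ℝ) := by exact_mod_cast t.isLt
    have ht0 : (0:ℝ) ≤ ((t:ℕ):ℝ) := Nat.cast_nonneg _
    have hk1R : (1:ℝ) ≤ (k₁:ℝ) := by exact_mod_cast hk11
    have hk1ℓR : (k₁:ℝ) ≤ (ℓ:ℝ) := by exact_mod_cast hk1ℓ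
    have hk2R : (1:ℝ) ≤ (k₂:ℝ) := by exact_mod_cast hk21
    have hk2ℓR : (k₂:ℝ) ≤ (ℓ:ℝ) := by exact_mod_cast hk2ℓ
    have hav_pos : k₁ ≤ (t:ℕ) → M/2 ≤ aval := by
      intro h
      have hc : (k₁:ℝ) ≤ ((t:ℕ):ℝ) := by exact_mod_cast h
      have hsin := jordan ℓ hℓ1 (((t:ℕ):ℝ) - k₁ + 1/2) (by linarith) (by linarith)
      have harg : θ - φ₁ = (((t:ℕ):ℝ) - k₁ + 1/2) * (Real.pi/(2*(ℓ:ℝ))) := by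
        rw [hθdef, hφ1def]; ring
      rw [← harg] at hsin
      have h2 : β * (1/(2*(ℓ:ℝ))) ≤ β * Real.sin (θ - φ₁) :=
        mul_le_mul_of_nonneg_left hsin hβ0.le
      have he : β * (1/(2*(ℓ:ℝ))) = M/2 := by
        rw [hβdef]; field_simp
      calc M/2 = β * (1/(2*(ℓ:ℝ))) := he.symm
        _ ≤ β * Real.sin (θ - φ₁) := h2
        _ ≤ aval := le_max_left _ _
    have hav_zero : (t:ℕ) < k₁ → aval = 0 := by
      intro h
      have hc : ((t:ℕ):ℝ) + 1 ≤ (k₁:ℝ) := by exact_mod_cast h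
      have hsin := jordan ℓ hℓ1 ((k₁:ℝ) - ((t:ℕ):ℝ) - 1/2) (by linarith) (by linarith)
      have harg : θ - φ₁ = -(((k₁:ℝ) - ((t:ℕ):ℝ) - 1/2) * (Real.pi/(2*(ℓ:ℝ)))) := by
        rw [hθdef, hφ1def]; ring
      have hs0 : 0 ≤ Real.sin (((k₁:ℝ) - ((t:ℕ):ℝ) - 1/2) * (Real.pi/(2*(ℓ:ℝ)))) :=
        le_trans (by positivity) hsin
      rw [havaldef, harg, Real.sin_neg]
      exact max_eq_right (by nlinarith only [hs0, hβ0.le])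
    have hbv_pos : (t:ℕ)+1 < k₂ → M/2 ≤ bval := by
      intro h
      have hc : ((t:ℕ):ℝ) + 2 ≤ (k₂:ℝ) := by exact_mod_cast h
      have hsin := jordan ℓ hℓ1 ((k₂:ℝ) - ((t:ℕ):ℝ) - 3/2) (by linarith) (by linarith)
      have harg : φ₂ - θ = ((k₂:ℝ) - ((t:ℕ):ℝ) - 3/2) * (Real.pi/(2*(ℓ:ℝ))) := by
        rw [hθdef, hφ2def]; ring
      rw [← harg] at hsin
      have h2 : β * (1/(2*(ℓ:ℝ))) ≤ β * Real.sin (φ₂ - θ) :=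
        mul_le_mul_of_nonneg_left hsin hβ0.le
      have he : β * (1/(2*(ℓ:ℝ))) = M/2 := by
        rw [hβdef]; field_simp
      calc M/2 = β * (1/(2*(ℓ:ℝ))) := he.symm
        _ ≤ β * Real.sin (φ₂ - θ) := h2
        _ ≤ bval := le_max_left _ _
    have hbv_zero : k₂ ≤ (t:ℕ)+1 → bval = 0 := by
      intro h
      have hc : (k₂:ℝ) ≤ ((t:ℕ):ℝ) + 1 := by exact_mod_cast h
      have hsin := jordan ℓ hℓ1 (((t:ℕ):ℝ) + 3/2 - (k₂:ℝ)) (by linarith) (by linarith)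
      have harg : φ₂ - θ = -((((t:ℕ):ℝ) + 3/2 - (k₂:ℝ)) * (Real.pi/(2*(ℓ:ℝ)))) := by
        rw [hθdef, hφ2def]; ring
      have hs0 : 0 ≤ Real.sin ((((t:ℕ):ℝ) + 3/2 - (k₂:ℝ)) * (Real.pi/(2*(ℓ:ℝ)))) :=
        le_trans (by positivity) hsin
      rw [hbvaldef, harg, Real.sin_neg]
      exact max_eq_right (by nlinarith only [hs0, hβ0.le])
    have hu : uval = if (t:ℕ) < k₁ then B₁ else 0 := by
      by_cases h : (t:ℕ) < k₁
      · rw [if_pos h, huvaldef, hav_zero h, mul_zero, sub_zero]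
        exact max_eq_left hB10.le
      · rw [if_neg h]
        have h1 := hav_pos (not_lt.mp h)
        have h2 : β * (M/2) ≤ β * aval := mul_le_mul_of_nonneg_left h1 hβ0.le
        have h3 : B₁ ≤ β * (M/2) := by rw [hB1def, hβdef]; nlinarith only [hmM, hLM0]
        rw [huvaldef]
        exact max_eq_right (by linarith)
    have hv : vval = if (t:ℕ)+1 < k₂ then 0 else B₁ := by
      by_cases h : (t:ℕ)+1 < k₂
      · rw [if_pos h]
        have h1 := hbv_pos h
        have h2 : β * (M/2) ≤ β * bval := mul_le_mul_of_nonneg_left h1 hβ0.le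
        have h3 : B₁ ≤ β * (M/2) := by rw [hB1def, hβdef]; nlinarith only [hmM, hLM0]
        rw [hvvaldef]
        exact max_eq_right (by linarith)
      · rw [if_neg h, hvvaldef, hbv_zero (not_lt.mp h), mul_zero, sub_zero]
        exact max_eq_left hB10.le
    have hg : gval = if (t:ℕ) < k₁ ∨ k₂ ≤ (t:ℕ)+1 then 0 else B₂ := by
      by_cases h : (t:ℕ) < k₁ ∨ k₂ ≤ (t:ℕ)+1
      · rw [if_pos h, hgvaldef]
        have hsum : B₁ ≤ uval + vval := by
          rcases h with h | h
          · rw [hu, if_pos h]; linarith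
          · have h' : ¬((t:ℕ)+1 < k₂) := by omega
            rw [hv, if_neg h']; linarith
        have h2 : β * B₁ ≤ β * (uval + vval) := mul_le_mul_of_nonneg_left hsum hβ0.le
        have hBB : B₂ ≤ β * B₁ := by rw [hB2def, hB1def, hβdef]; nlinarith only [mul_nonneg (mul_nonneg hLM0 hm0.le) (sub_nonneg.mpr (hβdef ▸ hmβ))]
        exact max_eq_right (by linarith)
      · rw [if_neg h]
        push_neg at h
        obtain ⟨h1, h2⟩ := h
        rw [hgvaldef, hu, if_neg (not_lt.mpr h1), hv, if_pos h2, add_zero, mul_zero, sub_zero]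
        exact max_eq_left hB20.le
    -- now compute eval
    have hH0 : (fun i => relu (∑ j, f.Win i j * H j t + f.bin i)) =
        fun i => if i = i0 then aval else if i = i1 then bval else 0 := by
      funext i
      simp only [hWin, hbin]
      by_cases hii0 : i = i0
      · subst hii0
        simp only [hi01, eq_self_iff_true, if_true, ite_true, if_false, ite_false]
        rw [sum_ite_two hj23, hx2, hx3, add_zero, havaldef]
        congr 1
        rw [Real.sin_sub]; ring
      · by_cases hii1 : i = i1
        · subst hii1
          simp only [hii0, eq_self_iff_true, if_true, ite_true, if_false, ite_false]
          rw [sum_ite_two hj23, hx2, hx3, add_zero, hbvaldef]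
          congr 1
          rw [Real.sin_sub]; ring
        · simp only [hii0, hii1, if_false, ite_false, zero_mul, Finset.sum_const_zero,
            add_zero]
          exact max_eq_right le_rfl
    have hL0 : layerStep (f.Wmid 0) (f.bmid 0)
        (fun i => if i = i0 then aval else if i = i1 then bval else 0) =
        fun i => if i = i0 then uval else if i = i1 then vval else 0 := by
      funext i
      simp only [layerStep, hW0, hb0]
      by_cases hii0 : i = i0
      · subst hii0
        simp only [hi01, eq_self_iff_true, if_true, ite_true, if_false, ite_false,
          true_or, or_true]
        rw [sum_ite_one]
        simp only [hi01, eq_self_iff_true, if_true, ite_true, if_false, ite_false]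
        rw [huvaldef]
        congr 1
        ring
      · by_cases hii1 : i = i1
        · subst hii1
          simp only [hii0, eq_self_iff_true, if_true, ite_true, if_false, ite_false,
            true_or, or_true, false_or]
          rw [sum_ite_one]
          simp only [hii0, eq_self_iff_true, if_true, ite_true, if_false, ite_false]
          rw [hvvaldef]
          congr 1
          ring
        · simp only [hii0, hii1, if_false, ite_false, or_self, false_or, or_false,
            zero_mul, Finset.sum_const_zero, add_zero]
          exact max_eq_right le_rfl
    have hL1 : layerStep (f.Wmid 1) (f.bmid 1)
        (fun i => if i = i0 then uval else if i = i1 then vval else 0) =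
        fun i => if i = i0 then gval else 0 := by
      funext i
      simp only [layerStep, hW1, hb1]
      by_cases hii0 : i = i0
      · subst hii0
        simp only [eq_self_iff_true, if_true, ite_true]
        rw [sum_ite_two hi01]
        simp only [hi01, Ne.symm hi01, eq_self_iff_true, if_true, ite_true, if_false,
          ite_false]
        rw [hgvaldef]
        congr 1
        ring
      · simp only [hii0, if_false, ite_false, zero_mul, Finset.sum_const_zero, add_zero]
        exact max_eq_right le_rfl
    have hmid : ∀ c : ℝ, 0 ≤ c →
        layerStep (fun i j => if i = i0 then (if j = i0 then p else 0) else 0)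
          (fun _ => (0:ℝ)) (fun i => if i = i0 then c else 0) =
        fun i => if i = i0 then p * c else 0 := by
      intro c hc
      funext i
      simp only [layerStep]
      by_cases hii0 : i = i0
      · subst hii0
        simp only [eq_self_iff_true, if_true, ite_true]
        rw [sum_ite_one]
        simp only [eq_self_iff_true, if_true, ite_true]
        rw [add_zero]
        exact max_eq_left (by positivity)
      · simp only [hii0, if_false, ite_false, zero_mul, Finset.sum_const_zero, add_zero]
        exact max_eq_right le_rfl
    have hlast : ∀ c : ℝ, 0 ≤ c →
        layerStep (fun _ j => if j = i0 then p else 0)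
          (fun _ => (0:ℝ)) (fun i => if i = i0 then c else 0) =
        fun _ => p * c := by
      intro c hc
      funext i
      simp only [layerStep]
      rw [sum_ite_one]
      simp only [eq_self_iff_true, if_true, ite_true]
      rw [add_zero]
      exact max_eq_left (by positivity)
    have heval : ∀ i, f.eval (fun r => H r t) i =
        (if r₁ ≤ (i:ℕ)+1 ∧ (i:ℕ)+1 ≤ r₂ then -κ else 0) * ((n:ℝ) * (p*(p*(p*(p*gval))))) := by
      intro i
      simp only [eval6]
      rw [hH0, hL0, hL1, hWm 2 (Or.inl rfl), hbm 2 (Or.inl rfl), hmid _ hgval0,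
        hWm 3 (Or.inr (Or.inl rfl)), hbm 3 (Or.inr (Or.inl rfl)),
        hmid _ (by positivity),
        hWm 4 (Or.inr (Or.inr rfl)), hbm 4 (Or.inr (Or.inr rfl)),
        hmid _ (by positivity),
        hW5, hb5, hlast _ (by positivity), hWout, hbout]
      simp only [Finset.sum_const, Finset.card_univ, Fintype.card_fin, nsmul_eq_mul,
        add_zero]
      ring
    funext i
    rw [heval]
    by_cases hcond : (t:ℕ) < k₁ ∨ k₂ ≤ (t:ℕ)+1
    · rw [if_pos hcond]
      rw [hg, if_pos hcond]
      ring
    · rw [if_neg hcond, hg, if_neg hcond]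
      by_cases hri : r₁ ≤ (i:ℕ)+1 ∧ (i:ℕ)+1 ≤ r₂
      · rw [if_pos hri, if_pos hri]
        have hne1 : (n:ℝ) ≠ 0 := ne_of_gt hnn0
        have hne2 : B₂ ≠ 0 := ne_of_gt hB20
        have hne3 : p ≠ 0 := ne_of_gt hp0
        have h1 : (n:ℝ) * (p*(p*(p*(p*B₂)))) = (n:ℝ) * Y := by rw [hYdef]; ring
        have hkey : κ * ((n:ℝ) * (p*(p*(p*(p*B₂))))) = M := by
          rw [h1, hκdef]
          exact div_mul_cancel₀ _ (ne_of_gt (mul_pos hnn0 hY0))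
        linarith [hkey]
      · rw [if_neg hri, if_neg hri]
        ring

end
end Paper
end
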